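/- Let f be an L(1,2)-edge labeling of T8, let S be a unit square, and let c ≥ 1. Suppose e, e', e'' ∈ G_S are three edges that do NOT form the edge set of a triangle of T8, with e non-slanting, f(e) = c, f(e') = c − 1 and f(e'') = c + 1. Then there exist three pairwise distinct unit squares S1, S2, S3, each with all vertices in S', such that no edge in G_{S1}, no edge in G_{S2} and no edge in G_{S3} has label c under f. -/

import Mathlib

/-- The infinite octagonal grid (king graph on `ℤ × ℤ`): distinct vertices are
adjacent iff their Chebyshev distance is `1`. -/
def T8 : SimpleGraph (ℤ × ℤ) where
  Adj u v := u ≠ v ∧ max |u.1 - v.1| |u.2 - v.2| = 1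
  symm := by
    constructor
    rintro u v ⟨h1, h2⟩
    refine ⟨h1.symm, ?_⟩
    rw [abs_sub_comm v.1 u.1, abs_sub_comm v.2 u.2]
    exact h2
  loopless := by constructor; rintro u ⟨h, -⟩; exact h rfl

/-- Two (unordered pairs regarded as) edges share an endpoint. -/
def SharesEndpoint (e1 e2 : Sym2 (ℤ × ℤ)) : Prop := ∃ v, v ∈ e1 ∧ v ∈ e2

/-- Two edges of `T8` are at distance `1`: distinct and sharing an endpoint. -/
def EdgeDist1 (e1 e2 : Sym2 (ℤ × ℤ)) : Prop := e1 ≠ e2 ∧ SharesEndpoint e1 e2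

/-- Two edges of `T8` are at distance `2`: distinct, sharing no endpoint, but some
edge of `T8` shares an endpoint with both. -/
def EdgeDist2 (e1 e2 : Sym2 (ℤ × ℤ)) : Prop :=
  e1 ≠ e2 ∧ ¬ SharesEndpoint e1 e2 ∧
    ∃ e3 ∈ T8.edgeSet, SharesEndpoint e1 e3 ∧ SharesEndpoint e3 e2

/-- `f` is an `L(1,2)`-edge labeling of `T8`: edges at distance `1` get distinct
labels and edges at distance `2` get labels differing by at least `2`. -/
def IsL12 (f : Sym2 (ℤ × ℤ) → ℕ) : Prop :=
  (∀ e1 ∈ T8.edgeSet, ∀ e2 ∈ T8.edgeSet, EdgeDist1 e1 e2 → f e1 ≠ f e2) ∧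
  (∀ e1 ∈ T8.edgeSet, ∀ e2 ∈ T8.edgeSet, EdgeDist2 e1 e2 → 2 ≤ |(f e1 : ℤ) - (f e2 : ℤ)|)

/-- An `L(1,2)`-edge labeling of `T8` with labels in `{0, …, n}`. -/
def IsL12Bounded (n : ℕ) (f : Sym2 (ℤ × ℤ) → ℕ) : Prop :=
  IsL12 f ∧ ∀ e ∈ T8.edgeSet, f e ≤ n

/-- The unit square `S(a,b)`. -/
def unitSquare (a b : ℤ) : Set (ℤ × ℤ) :=
  {(a, b), (a + 1, b), (a, b + 1), (a + 1, b + 1)}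

/-- `GS S`: the set of edges of `T8` incident to at least one vertex of `S`. -/
def GS (S : Set (ℤ × ℤ)) : Set (Sym2 (ℤ × ℤ)) :=
  {e | e ∈ T8.edgeSet ∧ ∃ v ∈ S, v ∈ e}

/-- `Sprime a b`: vertices at Chebyshev distance at most `2` from some vertex of
`S(a,b)` (that is, `S ∪ N(S) ∪ N(N(S))`). -/
def Sprime (a b : ℤ) : Set (ℤ × ℤ) :=
  {u | ∃ v ∈ unitSquare a b, max |u.1 - v.1| |u.2 - v.2| ≤ 2}

/-- Two edges sharing an endpoint `v`, written `e1 = {v, v+d1}` and `e2 = {v, v+d2}`,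
are at angle `45°` if exactly one of `d1, d2` has both coordinates nonzero and
`d1 · d2 = 1`. -/
def Angle45 (e1 e2 : Sym2 (ℤ × ℤ)) : Prop :=
  ∃ v d1 d2 : ℤ × ℤ, e1 = s(v, v + d1) ∧ e2 = s(v, v + d2) ∧
    Xor' (d1.1 ≠ 0 ∧ d1.2 ≠ 0) (d2.1 ≠ 0 ∧ d2.2 ≠ 0) ∧
    d1.1 * d2.1 + d1.2 * d2.2 = 1

/-- An edge is slanting if its endpoints differ in both coordinates. -/
def Slanting (e : Sym2 (ℤ × ℤ)) : Prop :=
  ∃ u v : ℤ × ℤ, e = s(u, v) ∧ u.1 ≠ v.1 ∧ u.2 ≠ v.2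

/-- `e, e', e''` form the edge set of a triangle of `T8`. -/
def TriangleEdgeSet (e e' e'' : Sym2 (ℤ × ℤ)) : Prop :=
  ∃ u v w : ℤ × ℤ, T8.Adj u v ∧ T8.Adj v w ∧ T8.Adj u w ∧
    ({e, e', e''} : Set (Sym2 (ℤ × ℤ))) = {s(u, v), s(v, w), s(u, w)}

/-- A triangle of `T8`: three pairwise adjacent vertices. -/
def IsTriangle (t : Finset (ℤ × ℤ)) : Prop :=
  t.card = 3 ∧ ∀ u ∈ t, ∀ v ∈ t, u ≠ v → T8.Adj u v

/-- The edges of a triangle. -/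
def triangleEdges (t : Finset (ℤ × ℤ)) : Set (Sym2 (ℤ × ℤ)) :=
  {e | ∃ u ∈ t, ∃ v ∈ t, u ≠ v ∧ e = s(u, v)}

/-! ### Auxiliary decidable combinatorial core -/

abbrev Pt := ℤ × ℤ
abbrev EO := Pt × Pt

def oadd (p q : Pt) : Pt := (p.1 + q.1, p.2 + q.2)

def mkEdge (o : Pt) (X : EO) : Sym2 (ℤ × ℤ) := s(oadd o X.1, oadd o X.2)

def gsO : List EO := [((0,0),(1,0)), ((0,0),(-1,0)), ((0,0),(0,1)), ((0,0),(0,-1)), ((0,0),(1,1)), ((0,0),(1,-1)), ((0,0),(-1,1)), ((0,0),(-1,-1)), ((1,0),(2,0)), ((1,0),(0,0)), ((1,0),(1,1)), ((1,0),(1,-1)), ((1,0),(2,1)), ((1,0),(2,-1)), ((1,0),(0,1)), ((1,0),(0,-1)), ((0,1),(1,1)), ((0,1),(-1,1)), ((0,1),(0,2)), ((0,1),(0,0)), ((0,1),(1,2)), ((0,1),(1,0)), ((0,1),(-1,2)), ((0,1),(-1,0)), ((1,1),(2,1)), ((1,1),(0,1)), ((1,1),(1,2)), ((1,1),(1,0)),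 ((1,1),(2,2)), ((1,1),(2,0)), ((1,1),(0,2)), ((1,1),(0,0))]

def candsO : List Pt := [(-1,-1), (-1,1), (1,-1), (1,1), (-1,0), (0,-1), (0,1), (1,0), (-2,0), (0,-2), (0,2), (2,0), (-2,-1), (-2,1), (-1,-2), (-1,2), (1,-2), (1,2), (2,-1), (2,1), (-2,-2), (-2,2), (2,-2), (2,2), (0,0)]

def adjB (p q : Pt) : Bool :=
  decide (p ≠ q) && decide (p.1 - q.1 ≤ 1) && decide (q.1 - p.1 ≤ 1) &&
    decide (p.2 - q.2 ≤ 1) && decide (q.2 - p.2 ≤ 1)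

def eqEB (X Y : EO) : Bool :=
  (decide (X.1 = Y.1) && decide (X.2 = Y.2)) || (decide (X.1 = Y.2) && decide (X.2 = Y.1))

def sharesB (X Y : EO) : Bool :=
  decide (X.1 = Y.1) || decide (X.1 = Y.2) || decide (X.2 = Y.1) || decide (X.2 = Y.2)

def connB (X Y : EO) : Bool :=
  adjB X.1 Y.1 || adjB X.1 Y.2 || adjB X.2 Y.1 || adjB X.2 Y.2

def nonslantB (X : EO) : Bool := decide (X.1.1 = X.2.1) || decide (X.1.2 = X.2.2)

def memEB (v : Pt) (Y : EO) : Bool := decide (v = Y.1) || decide (v = Y.2)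

def commonB (E E' E'' : EO) : Bool :=
  (memEB E.1 E' && memEB E.1 E'') || (memEB E.2 E' && memEB E.2 E'')

def cfgOK (E E' E'' : EO) : Bool :=
  sharesB E E' && sharesB E E'' && !eqEB E E' && !eqEB E E'' && !eqEB E' E'' &&
    nonslantB E && (!sharesB E' E'' || commonB E E' E'')

def safeB (X E E' E'' : EO) : Bool :=
  eqEB X E' || eqEB X E'' ||
  (!eqEB X E && (sharesB X E || connB X E)) ||
  (!sharesB X E' && connB X E') ||
  (!sharesB X E'' && connB X E'')

def shiftE (w : Pt) (X : EO) : EO := (oadd w X.1, oadd w X.2)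

def inRangeB (w : Pt) : Bool :=
  decide (-2 ≤ w.1) && decide (w.1 ≤ 2) && decide (-2 ≤ w.2) && decide (w.2 ≤ 2)

def goodSqB (w : Pt) (E E' E'' : EO) : Bool :=
  inRangeB w && gsO.all (fun X => safeB (shiftE w X) E E' E'')

/-- scan a list, succeeding as soon as `k` entries satisfying `p` have been found -/
def scan3 (p : Pt → Bool) : List Pt → Nat → Bool
  | _, 0 => true
  | [], _ + 1 => false
  | w :: ws, k + 1 => if p w then scan3 p ws k else scan3 p ws (k + 1)

def checkB (E E' E'' : EO) : Bool := scan3 (fun w => goodSqB w E E' E'') candsO 3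

def coreFor (E : EO) : Bool :=
  gsO.all fun E' => gsO.all fun E'' => !cfgOK E E' E'' || checkB E E' E''
section CoreDecide
set_option maxHeartbeats 4000000

theorem coreL0 : coreFor ((0,0),(1,0)) = true := by decide
theorem coreL1 : coreFor ((0,0),(-1,0)) = true := by decide
theorem coreL2 : coreFor ((0,0),(0,1)) = true := by decide
theorem coreL3 : coreFor ((0,0),(0,-1)) = true := by decide
theorem coreL4 : coreFor ((1,0),(2,0)) = true := by decide
theorem coreL5 : coreFor ((1,0),(0,0)) = true := by decide
theorem coreL6 : coreFor ((1,0),(1,1)) = true := by decide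
theorem coreL7 : coreFor ((1,0),(1,-1)) = true := by decide
theorem coreL8 : coreFor ((0,1),(1,1)) = true := by decide
theorem coreL9 : coreFor ((0,1),(-1,1)) = true := by decide
theorem coreL10 : coreFor ((0,1),(0,2)) = true := by decide
theorem coreL11 : coreFor ((0,1),(0,0)) = true := by decide
theorem coreL12 : coreFor ((1,1),(2,1)) = true := by decide
theorem coreL13 : coreFor ((1,1),(0,1)) = true := by decide
theorem coreL14 : coreFor ((1,1),(1,2)) = true := by decide
theorem coreL15 : coreFor ((1,1),(1,0)) = true := by decide

end CoreDecide

lemma useCore {E : EO} (h : coreFor E = true) :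
    ∀ E' ∈ gsO, ∀ E'' ∈ gsO, cfgOK E E' E'' = true → checkB E E' E'' = true := by
  intro E' h1 E'' h2 h3
  have h4 := List.all_eq_true.mp (List.all_eq_true.mp h E' h1) E'' h2
  rw [h3] at h4
  simpa using h4

lemma useSlant {E : EO} (h : nonslantB E = false) :
    ∀ E' ∈ gsO, ∀ E'' ∈ gsO, cfgOK E E' E'' = true → checkB E E' E'' = true := by
  intro E' _ E'' _ h3
  simp only [cfgOK, Bool.and_eq_true] at h3
  rw [h] at h3
  simp at h3

lemma coreAll : ∀ E ∈ gsO, ∀ E' ∈ gsO, ∀ E'' ∈ gsO,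
    cfgOK E E' E'' = true → checkB E E' E'' = true := by
  intro E hE
  fin_cases hE
  · exact useCore coreL0
  · exact useCore coreL1
  · exact useCore coreL2
  · exact useCore coreL3
  · exact useSlant rfl
  · exact useSlant rfl
  · exact useSlant rfl
  · exact useSlant rfl
  · exact useCore coreL4
  · exact useCore coreL5
  · exact useCore coreL6
  · exact useCore coreL7
  · exact useSlant rfl
  · exact useSlant rfl
  · exact useSlant rfl
  · exact useSlant rfl
  · exact useCore coreL8
  · exact useCore coreL9
  · exact useCore coreL10
  · exact useCore coreL11
  · exact useSlant rfl
  · exact useSlant rfl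
  · exact useSlant rfl
  · exact useSlant rfl
  · exact useCore coreL12
  · exact useCore coreL13
  · exact useCore coreL14
  · exact useCore coreL15
  · exact useSlant rfl
  · exact useSlant rfl
  · exact useSlant rfl
  · exact useSlant rfl

lemma gs_conn_lem : (gsO.all fun X => gsO.all fun Y => sharesB X Y || connB X Y) = true := by
  decide
/-! ### Bridging lemmas between the boolean offset level and the graph level -/

lemma oadd_inj {o p q : Pt} : oadd o p = oadd o q ↔ p = q := by
  simp only [oadd, Prod.ext_iff]
  omega

lemma oadd_assoc (o w p : Pt) : oadd (oadd o w) p = oadd o (oadd w p) := by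
  simp [oadd, add_assoc]

lemma mkEdge_shift (o w : Pt) (X : EO) :
    mkEdge (oadd o w) X = mkEdge o (shiftE w X) := by
  simp [mkEdge, shiftE, oadd_assoc]

lemma T8_adj_iff (u v : ℤ × ℤ) :
    T8.Adj u v ↔ u ≠ v ∧ (u.1 - v.1 ≤ 1 ∧ v.1 - u.1 ≤ 1 ∧ u.2 - v.2 ≤ 1 ∧ v.2 - u.2 ≤ 1) := by
  show (u ≠ v ∧ max |u.1 - v.1| |u.2 - v.2| = 1) ↔ _
  constructor
  · rintro ⟨h1, h2⟩
    refine ⟨h1, ?_⟩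
    have hx : |u.1 - v.1| ≤ 1 := h2 ▸ le_max_left _ _
    have hy : |u.2 - v.2| ≤ 1 := h2 ▸ le_max_right _ _
    rw [abs_le] at hx hy
    omega
  · rintro ⟨h1, h2⟩
    refine ⟨h1, le_antisymm (max_le (abs_le.mpr (by omega)) (abs_le.mpr (by omega))) ?_⟩
    have h3 : ¬(u.1 = v.1 ∧ u.2 = v.2) := fun ⟨ha, hb⟩ => h1 (Prod.ext ha hb)
    by_cases hx : u.1 = v.1
    · have h4 : u.2 ≠ v.2 := fun h => h3 ⟨hx, h⟩
      have h5 : 1 ≤ |u.2 - v.2| := Int.one_le_abs (by omega)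
      exact le_trans h5 (le_max_right _ _)
    · have h5 : 1 ≤ |u.1 - v.1| := Int.one_le_abs (by omega)
      exact le_trans h5 (le_max_left _ _)

lemma adjB_iff (o : Pt) (p q : Pt) : adjB p q = true ↔ T8.Adj (oadd o p) (oadd o q) := by
  rw [T8_adj_iff]
  simp only [ne_eq, oadd_inj]
  simp only [adjB, Bool.and_eq_true, decide_eq_true_eq, ne_eq, oadd, Prod.ext_iff]
  omega

lemma mkEdge_edgeSet {o : Pt} {X : EO} (h : adjB X.1 X.2 = true) :
    mkEdge o X ∈ T8.edgeSet := by
  rw [mkEdge, SimpleGraph.mem_edgeSet]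
  exact (adjB_iff o _ _).mp h

lemma eqEB_iff (o : Pt) (X Y : EO) : eqEB X Y = true ↔ mkEdge o X = mkEdge o Y := by
  simp [eqEB, mkEdge, Sym2.eq_iff, oadd_inj]

lemma mem_mkEdge_iff {v : ℤ × ℤ} {o : Pt} {X : EO} :
    v ∈ mkEdge o X ↔ v = oadd o X.1 ∨ v = oadd o X.2 := by
  simp [mkEdge]

lemma sharesB_iff (o : Pt) (X Y : EO) :
    sharesB X Y = true ↔ SharesEndpoint (mkEdge o X) (mkEdge o Y) := by
  simp only [sharesB, Bool.or_eq_true, decide_eq_true_eq, SharesEndpoint]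
  constructor
  · rintro (((h | h) | h) | h)
    · exact ⟨oadd o X.1, mem_mkEdge_iff.mpr (Or.inl rfl), mem_mkEdge_iff.mpr (Or.inl (by rw [h]))⟩
    · exact ⟨oadd o X.1, mem_mkEdge_iff.mpr (Or.inl rfl), mem_mkEdge_iff.mpr (Or.inr (by rw [h]))⟩
    · exact ⟨oadd o X.2, mem_mkEdge_iff.mpr (Or.inr rfl), mem_mkEdge_iff.mpr (Or.inl (by rw [h]))⟩
    · exact ⟨oadd o X.2, mem_mkEdge_iff.mpr (Or.inr rfl), mem_mkEdge_iff.mpr (Or.inr (by rw [h]))⟩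
  · rintro ⟨v, hv1, hv2⟩
    rw [mem_mkEdge_iff] at hv1 hv2
    rcases hv1 with h1 | h1 <;> rcases hv2 with h2 | h2 <;>
      (rw [h1] at h2; rw [oadd_inj] at h2) <;> simp [h2]

lemma mkEdge_ne_of_not_shares {o : Pt} {X Y : EO} (h : sharesB X Y = false) :
    mkEdge o X ≠ mkEdge o Y := by
  intro hEq
  have hS : SharesEndpoint (mkEdge o X) (mkEdge o Y) :=
    ⟨oadd o X.1, mem_mkEdge_iff.mpr (Or.inl rfl), hEq ▸ mem_mkEdge_iff.mpr (Or.inl rfl)⟩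
  rw [← sharesB_iff o, h] at hS
  exact Bool.noConfusion hS

lemma connB_sound {o : Pt} {X Y : EO} (h : connB X Y = true) :
    ∃ e3 ∈ T8.edgeSet, SharesEndpoint (mkEdge o X) e3 ∧ SharesEndpoint e3 (mkEdge o Y) := by
  simp only [connB, Bool.or_eq_true] at h
  rcases h with ((h | h) | h) | h
  · exact ⟨s(oadd o X.1, oadd o Y.1), T8.mem_edgeSet.mpr ((adjB_iff o _ _).mp h),
      ⟨oadd o X.1, mem_mkEdge_iff.mpr (Or.inl rfl), by simp⟩,
      ⟨oadd o Y.1, by simp, mem_mkEdge_iff.mpr (Or.inl rfl)⟩⟩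
  · exact ⟨s(oadd o X.1, oadd o Y.2), T8.mem_edgeSet.mpr ((adjB_iff o _ _).mp h),
      ⟨oadd o X.1, mem_mkEdge_iff.mpr (Or.inl rfl), by simp⟩,
      ⟨oadd o Y.2, by simp, mem_mkEdge_iff.mpr (Or.inr rfl)⟩⟩
  · exact ⟨s(oadd o X.2, oadd o Y.1), T8.mem_edgeSet.mpr ((adjB_iff o _ _).mp h),
      ⟨oadd o X.2, mem_mkEdge_iff.mpr (Or.inr rfl), by simp⟩,
      ⟨oadd o Y.1, by simp, mem_mkEdge_iff.mpr (Or.inl rfl)⟩⟩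
  · exact ⟨s(oadd o X.2, oadd o Y.2), T8.mem_edgeSet.mpr ((adjB_iff o _ _).mp h),
      ⟨oadd o X.2, mem_mkEdge_iff.mpr (Or.inr rfl), by simp⟩,
      ⟨oadd o Y.2, by simp, mem_mkEdge_iff.mpr (Or.inr rfl)⟩⟩

lemma edgeDist2_of {o : Pt} {X Y : EO} (hsh : sharesB X Y = false) (hco : connB X Y = true) :
    EdgeDist2 (mkEdge o X) (mkEdge o Y) := by
  refine ⟨mkEdge_ne_of_not_shares hsh, ?_, connB_sound hco⟩
  intro hS
  rw [← sharesB_iff o, hsh] at hS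
  exact Bool.noConfusion hS
/-! ### Soundness of `safeB`, extraction of three squares, and geometric glue -/

lemma safe_sound {f : Sym2 (ℤ × ℤ) → ℕ} (hf : IsL12 f) {c : ℕ} (hc : 1 ≤ c) (o : Pt)
    {E E' E'' X : EO}
    (hE : mkEdge o E ∈ T8.edgeSet) (hE' : mkEdge o E' ∈ T8.edgeSet)
    (hE'' : mkEdge o E'' ∈ T8.edgeSet) (hX : mkEdge o X ∈ T8.edgeSet)
    (h1 : f (mkEdge o E) = c) (h2 : f (mkEdge o E') = c - 1) (h3 : f (mkEdge o E'') = c + 1)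
    (hs : safeB X E E' E'' = true) : f (mkEdge o X) ≠ c := by
  have hc1 : ((c : ℕ) : ℤ) - ((c - 1 : ℕ) : ℤ) = 1 := by omega
  have hc2 : ((c : ℕ) : ℤ) - ((c + 1 : ℕ) : ℤ) = -1 := by omega
  simp only [safeB, Bool.or_eq_true, Bool.and_eq_true, Bool.not_eq_true'] at hs
  rcases hs with (((h | h) | ⟨hne, hor⟩) | ⟨hnsh, hco⟩) | ⟨hnsh, hco⟩
  · rw [(eqEB_iff o _ _).mp h, h2]; omega
  · rw [(eqEB_iff o _ _).mp h, h3]; omega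
  · -- within distance ≤ 2 from e
    have hneq : mkEdge o X ≠ mkEdge o E := by
      intro hh; rw [← eqEB_iff o, hne] at hh; exact Bool.noConfusion hh
    cases hor with
    | inl hsh =>
      intro hcc
      exact hf.1 _ hX _ hE ⟨hneq, (sharesB_iff o _ _).mp hsh⟩ (by rw [hcc, h1])
    | inr hco =>
      by_cases hsh : sharesB X E = true
      · intro hcc
        exact hf.1 _ hX _ hE ⟨hneq, (sharesB_iff o _ _).mp hsh⟩ (by rw [hcc, h1])
      · have hshf : sharesB X E = false := by simpa using hsh
        have hd2 := hf.2 _ hX _ hE (edgeDist2_of hshf hco)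
        intro hcc
        rw [hcc, h1, sub_self, abs_zero] at hd2
        omega
  · -- distance exactly 2 from e'
    have hd2 := hf.2 _ hX _ hE' (edgeDist2_of hnsh hco)
    intro hcc
    rw [hcc, h2, hc1] at hd2
    norm_num at hd2
  · -- distance exactly 2 from e''
    have hd2 := hf.2 _ hX _ hE'' (edgeDist2_of hnsh hco)
    intro hcc
    rw [hcc, h3, hc2] at hd2
    norm_num at hd2

lemma scan3_le {p : Pt → Bool} : ∀ (l : List Pt) (k : Nat),
    scan3 p l k = true → k ≤ (l.filter p).length := by
  intro l
  induction l with
  | nil =>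
    intro k h
    cases k with
    | zero => simp
    | succ k => simp [scan3] at h
  | cons w ws ih =>
    intro k h
    cases k with
    | zero => simp
    | succ k =>
      rw [scan3] at h
      by_cases hw : p w = true
      · rw [if_pos hw] at h
        have := ih k h
        simp only [List.filter_cons, hw, if_pos, List.length_cons]
        omega
      · rw [if_neg hw] at h
        have := ih (k+1) h
        simp only [List.filter_cons, hw]
        simpa using this

lemma extract3 {p : Pt → Bool} {l : List Pt} (hnd : l.Nodup) (h : scan3 p l 3 = true) :
    ∃ w1 w2 w3 : Pt, w1 ≠ w2 ∧ w1 ≠ w3 ∧ w2 ≠ w3 ∧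
      p w1 = true ∧ p w2 = true ∧ p w3 = true := by
  have hlen := scan3_le l 3 h
  obtain ⟨w1, w2, w3, t, hm⟩ : ∃ w1 w2 w3 t, l.filter p = w1 :: w2 :: w3 :: t := by
    rcases hfm : l.filter p with _ | ⟨w1, _ | ⟨w2, _ | ⟨w3, t⟩⟩⟩ <;> rw [hfm] at hlen
    · simp only [List.length_nil] at hlen; omega
    · simp only [List.length_cons, List.length_nil] at hlen; omega
    · simp only [List.length_cons, List.length_nil] at hlen; omega
    · exact ⟨w1, w2, w3, t, rfl⟩
  have hndf : (l.filter p).Nodup := hnd.filter p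
  have hmem : ∀ x ∈ l.filter p, p x = true := fun x hx => List.of_mem_filter hx
  rw [hm] at hndf hmem
  simp only [List.nodup_cons, List.mem_cons] at hndf
  refine ⟨w1, w2, w3, ?_, ?_, ?_, ?_, ?_, ?_⟩
  · exact fun hh => hndf.1 (Or.inl hh)
  · exact fun hh => hndf.1 (Or.inr (Or.inl hh))
  · exact fun hh => hndf.2.1 (Or.inl hh)
  · exact hmem w1 (by simp)
  · exact hmem w2 (by simp)
  · exact hmem w3 (by simp)

lemma candsO_nodup : candsO.Nodup := by decide

lemma mem_gsO {X1 X2 : Pt} (hX1 : X1 = (0,0) ∨ X1 = (1,0) ∨ X1 = (0,1) ∨ X1 = (1,1))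
    (h1 : ¬(X2.1 = 0 ∧ X2.2 = 0))
    (h2 : X2.1 ≤ 1 ∧ -1 ≤ X2.1 ∧ X2.2 ≤ 1 ∧ -1 ≤ X2.2) :
    ((X1, oadd X1 X2) : EO) ∈ gsO := by
  have hd1 : X2.1 = -1 ∨ X2.1 = 0 ∨ X2.1 = 1 := by omega
  have hd2 : X2.2 = -1 ∨ X2.2 = 0 ∨ X2.2 = 1 := by omega
  rcases hX1 with rfl | rfl | rfl | rfl <;>
    rcases hd1 with hA | hA | hA <;> rcases hd2 with hB | hB | hB <;>
      first
      | (exfalso; exact h1 ⟨hA, hB⟩)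
      | (rw [show X2 = (X2.1, X2.2) from rfl, hA, hB]; decide)

/-- Membership extraction for `GS` of an arbitrary unit square. -/
lemma gs_mem {a b : ℤ} {x : Sym2 (ℤ × ℤ)} (h : x ∈ GS (unitSquare a b)) :
    x ∈ T8.edgeSet ∧ ∃ X ∈ gsO, x = mkEdge (a, b) X := by
  obtain ⟨hes, v, hv, hvx⟩ := h
  refine ⟨hes, ?_⟩
  revert hes hvx
  induction x using Sym2.ind with
  | _ u w =>
    intro hes hvx
    have hadj : T8.Adj u w := T8.mem_edgeSet.mp hes
    rw [T8_adj_iff] at hadj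
    obtain ⟨hne, hb1, hb2, hb3, hb4⟩ := hadj
    have hne' : ¬(u.1 = w.1 ∧ u.2 = w.2) := fun ⟨p1, p2⟩ => hne (Prod.ext p1 p2)
    simp only [unitSquare, Set.mem_insert_iff, Set.mem_singleton_iff, Prod.ext_iff] at hv
    rw [Sym2.mem_iff] at hvx
    rcases hvx with rfl | rfl
    · -- v = u
      refine ⟨((v.1 - a, v.2 - b), oadd (v.1 - a, v.2 - b) (w.1 - v.1, w.2 - v.2)), ?_, ?_⟩
      · apply mem_gsO
        · simp only [Prod.mk.injEq]
          omega
        · simp only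
          omega
        · simp only
          omega
      · rw [mkEdge, Sym2.eq_iff]
        left
        constructor <;> refine Prod.ext ?_ ?_ <;> simp only [oadd] <;> omega
    · -- v = w
      refine ⟨((v.1 - a, v.2 - b), oadd (v.1 - a, v.2 - b) (u.1 - v.1, u.2 - v.2)), ?_, ?_⟩
      · apply mem_gsO
        · simp only [Prod.mk.injEq]
          omega
        · simp only
          omega
        · simp only
          omega
      · rw [mkEdge, Sym2.eq_iff]
        right
        constructor <;> refine Prod.ext ?_ ?_ <;> simp only [oadd] <;> omega

lemma pt_mem_sprime {a b u1 u2 : ℤ} (h1 : a - 2 ≤ u1) (h2 : u1 ≤ a + 3)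
    (h3 : b - 2 ≤ u2) (h4 : u2 ≤ b + 3) : ((u1, u2) : ℤ × ℤ) ∈ Sprime a b := by
  rcases le_total u1 a with hA | hA <;> rcases le_total u2 b with hB | hB
  · exact ⟨(a, b), by simp [unitSquare], by simp only [max_le_iff, abs_le]; omega⟩
  · exact ⟨(a, b + 1), by simp [unitSquare], by simp only [max_le_iff, abs_le]; omega⟩
  · exact ⟨(a + 1, b), by simp [unitSquare], by simp only [max_le_iff, abs_le]; omega⟩
  · exact ⟨(a + 1, b + 1), by simp [unitSquare], by simp only [max_le_iff, abs_le]; omega⟩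

lemma square_sub_sprime {a b x y : ℤ} (hx1 : -2 ≤ x) (hx2 : x ≤ 2) (hy1 : -2 ≤ y) (hy2 : y ≤ 2) :
    unitSquare (a + x) (b + y) ⊆ Sprime a b := by
  intro u hu
  simp only [unitSquare, Set.mem_insert_iff, Set.mem_singleton_iff] at hu
  rcases hu with rfl | rfl | rfl | rfl <;>
    exact pt_mem_sprime (by omega) (by omega) (by omega) (by omega)

/-- From three distinct pairwise-sharing edges with no common vertex, build a triangle. -/
lemma tri_real {e e' e'' : Sym2 (ℤ × ℤ)}
    (h1 : e ∈ T8.edgeSet) (h2 : e' ∈ T8.edgeSet) (h3 : e'' ∈ T8.edgeSet)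
    (hne1 : e ≠ e') (hne2 : e ≠ e'') (hne3 : e' ≠ e'')
    (hs1 : SharesEndpoint e e') (hs2 : SharesEndpoint e e'') (hs3 : SharesEndpoint e' e'')
    (hcom : ¬∃ v, v ∈ e ∧ v ∈ e' ∧ v ∈ e'') : TriangleEdgeSet e e' e'' := by
  obtain ⟨v12, hv12a, hv12b⟩ := hs1
  obtain ⟨v13, hv13a, hv13b⟩ := hs2
  obtain ⟨v23, hv23a, hv23b⟩ := hs3
  have hne12_13 : v12 ≠ v13 := fun h => hcom ⟨v12, hv12a, hv12b, h ▸ hv13b⟩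
  have hne12_23 : v12 ≠ v23 := fun h => hcom ⟨v12, hv12a, hv12b, h ▸ hv23b⟩
  have hne13_23 : v13 ≠ v23 := fun h => hcom ⟨v13, hv13a, h ▸ hv23a, hv13b⟩
  have he : e = s(v12, v13) := ((Sym2.mem_and_mem_iff hne12_13).mp ⟨hv12a, hv13a⟩)
  have he' : e' = s(v12, v23) := ((Sym2.mem_and_mem_iff hne12_23).mp ⟨hv12b, hv23a⟩)
  have he'' : e'' = s(v13, v23) := ((Sym2.mem_and_mem_iff hne13_23).mp ⟨hv13b, hv23b⟩)
  refine ⟨v12, v13, v23, ?_, ?_, ?_, ?_⟩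
  · exact T8.mem_edgeSet.mp (he ▸ h1)
  · exact T8.mem_edgeSet.mp (he'' ▸ h3)
  · exact T8.mem_edgeSet.mp (he' ▸ h2)
  · rw [he, he', he'']
    rw [show ({s(v12,v13), s(v12,v23), s(v13,v23)} : Set (Sym2 (ℤ × ℤ)))
        = insert s(v12,v13) {s(v12,v23), s(v13,v23)} from rfl]
    rw [show ({s(v12,v13), s(v13,v23), s(v12,v23)} : Set (Sym2 (ℤ × ℤ)))
        = insert s(v12,v13) {s(v13,v23), s(v12,v23)} from rfl]
    rw [Set.pair_comm]
/-- If three consecutive labels `c-1, c, c+1` are used on three edges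
of `G_S` not forming a triangle, with `c` on a non-slanting edge, then there are
three pairwise distinct unit squares with all vertices in `S'` on which `c` is not
used. -/
lemma mkEdge_shift' (a b : ℤ) (w : Pt) (X : EO) :
    mkEdge (a + w.1, b + w.2) X = mkEdge (a, b) (shiftE w X) := mkEdge_shift (a, b) w X

theorem notriangle_nonslanting_three_squares (f : Sym2 (ℤ × ℤ) → ℕ) (hf : IsL12 f)
    (a b : ℤ) (c : ℕ) (hc : 1 ≤ c) (e e' e'' : Sym2 (ℤ × ℤ))
    (he : e ∈ GS (unitSquare a b)) (he' : e' ∈ GS (unitSquare a b))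
    (he'' : e'' ∈ GS (unitSquare a b))
    (htri : ¬ TriangleEdgeSet e e' e'') (hsl : ¬ Slanting e)
    (hfe : f e = c) (hfe' : f e' = c - 1) (hfe'' : f e'' = c + 1) :
    ∃ p1 p2 p3 : ℤ × ℤ, p1 ≠ p2 ∧ p1 ≠ p3 ∧ p2 ≠ p3 ∧
      unitSquare p1.1 p1.2 ⊆ Sprime a b ∧ unitSquare p2.1 p2.2 ⊆ Sprime a b ∧
      unitSquare p3.1 p3.2 ⊆ Sprime a b ∧
      (∀ e1 ∈ GS (unitSquare p1.1 p1.2), f e1 ≠ c) ∧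
      (∀ e1 ∈ GS (unitSquare p2.1 p2.2), f e1 ≠ c) ∧
      (∀ e1 ∈ GS (unitSquare p3.1 p3.2), f e1 ≠ c) := by
  obtain ⟨heS, E, hEm, heq⟩ := gs_mem he
  obtain ⟨heS', E', hE'm, heq'⟩ := gs_mem he'
  obtain ⟨heS'', E'', hE''m, heq''⟩ := gs_mem he''
  subst heq heq' heq''
  -- the three edges are pairwise distinct (distinct labels)
  have hd1 : mkEdge (a, b) E ≠ mkEdge (a, b) E' := fun h => by rw [h, hfe'] at hfe; omega
  have hd2 : mkEdge (a, b) E ≠ mkEdge (a, b) E'' := fun h => by rw [h, hfe''] at hfe; omega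
  have hd3 : mkEdge (a, b) E' ≠ mkEdge (a, b) E'' := fun h => by rw [h, hfe''] at hfe'; omega
  have hq1 : eqEB E E' = false := by
    cases h : eqEB E E'
    · rfl
    · exact absurd ((eqEB_iff (a, b) _ _).mp h) hd1
  have hq2 : eqEB E E'' = false := by
    cases h : eqEB E E''
    · rfl
    · exact absurd ((eqEB_iff (a, b) _ _).mp h) hd2
  have hq3 : eqEB E' E'' = false := by
    cases h : eqEB E' E''
    · rfl
    · exact absurd ((eqEB_iff (a, b) _ _).mp h) hd3
  -- e shares an endpoint with e' and with e''
  have hsh1 : sharesB E E' = true := by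
    cases h : sharesB E E'
    · exfalso
      have hco : connB E E' = true := by
        have h2 := List.all_eq_true.mp (List.all_eq_true.mp gs_conn_lem E hEm) E' hE'm
        rw [Bool.or_eq_true, h] at h2
        simpa using h2
      have hd := hf.2 _ heS _ heS' (edgeDist2_of h hco)
      rw [hfe, hfe', show ((c : ℕ) : ℤ) - ((c - 1 : ℕ) : ℤ) = 1 by omega] at hd
      norm_num at hd
    · rfl
  have hsh2 : sharesB E E'' = true := by
    cases h : sharesB E E''
    · exfalso
      have hco : connB E E'' = true := by
        have h2 := List.all_eq_true.mp (List.all_eq_true.mp gs_conn_lem E hEm) E'' hE''m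
        rw [Bool.or_eq_true, h] at h2
        simpa using h2
      have hd := hf.2 _ heS _ heS'' (edgeDist2_of h hco)
      rw [hfe, hfe'', show ((c : ℕ) : ℤ) - ((c + 1 : ℕ) : ℤ) = -1 by omega] at hd
      norm_num at hd
    · rfl
  -- e is not slanting
  have hns : nonslantB E = true := by
    cases h : nonslantB E
    · exfalso
      apply hsl
      simp only [nonslantB, Bool.or_eq_false_iff, decide_eq_false_iff_not] at h
      refine ⟨oadd (a, b) E.1, oadd (a, b) E.2, rfl, ?_, ?_⟩ <;> simp only [oadd] <;> omega
    · rfl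
  -- no triangle
  have htb : (!sharesB E' E'' || commonB E E' E'') = true := by
    cases h : sharesB E' E''
    · simp
    · cases hcm : commonB E E' E''
      · exfalso
        apply htri
        apply tri_real heS heS' heS'' hd1 hd2 hd3 ((sharesB_iff (a, b) _ _).mp hsh1)
          ((sharesB_iff (a, b) _ _).mp hsh2) ((sharesB_iff (a, b) _ _).mp h)
        rintro ⟨v, hv1, hv2, hv3⟩
        rw [mem_mkEdge_iff] at hv1 hv2 hv3
        have hcm' : commonB E E' E'' = true := by
          simp only [commonB, memEB, Bool.or_eq_true, Bool.and_eq_true, decide_eq_true_eq]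
          rcases hv1 with rfl | rfl <;> simp only [oadd_inj] at hv2 hv3 <;> tauto
        rw [hcm'] at hcm
        exact Bool.noConfusion hcm
      · simp
  have hcfg : cfgOK E E' E'' = true := by
    simp only [cfgOK, Bool.and_eq_true, hsh1, hsh2, hq1, hq2, hq3, hns, htb]
    simp
  have hchk := coreAll E hEm E' hE'm E'' hE''m hcfg
  rw [checkB] at hchk
  obtain ⟨w1, w2, w3, h12, h13, h23, hg1, hg2, hg3⟩ := extract3 candsO_nodup hchk
  have unpack : ∀ {w : Pt}, goodSqB w E E' E'' = true →
      ((-2 ≤ w.1 ∧ w.1 ≤ 2) ∧ (-2 ≤ w.2 ∧ w.2 ≤ 2)) ∧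
        ∀ X ∈ gsO, safeB (shiftE w X) E E' E'' = true := by
    intro w hw
    simp only [goodSqB, inRangeB, Bool.and_eq_true, decide_eq_true_eq,
      List.all_eq_true] at hw
    obtain ⟨⟨⟨⟨ha1, ha2⟩, ha3⟩, ha4⟩, ha5⟩ := hw
    exact ⟨⟨⟨ha1, ha2⟩, ⟨ha3, ha4⟩⟩, ha5⟩
  obtain ⟨⟨⟨hx11, hx12⟩, hy11, hy12⟩, hall1⟩ := unpack hg1
  obtain ⟨⟨⟨hx21, hx22⟩, hy21, hy22⟩, hall2⟩ := unpack hg2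
  obtain ⟨⟨⟨hx31, hx32⟩, hy31, hy32⟩, hall3⟩ := unpack hg3
  have key : ∀ w : Pt, (∀ X ∈ gsO, safeB (shiftE w X) E E' E'' = true) →
      ∀ e1 ∈ GS (unitSquare (a + w.1) (b + w.2)), f e1 ≠ c := by
    intro w hall e1 he1
    obtain ⟨he1S, X, hXm, he1eq⟩ := gs_mem he1
    subst he1eq
    rw [mkEdge_shift'] at he1S ⊢
    exact safe_sound hf hc (a, b) heS heS' heS'' he1S hfe hfe' hfe'' (hall X hXm)
  refine ⟨(a + w1.1, b + w1.2), (a + w2.1, b + w2.2), (a + w3.1, b + w3.2), ?_, ?_, ?_,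
    square_sub_sprime hx11 hx12 hy11 hy12, square_sub_sprime hx21 hx22 hy21 hy22,
    square_sub_sprime hx31 hx32 hy31 hy32,
    key w1 hall1, key w2 hall2, key w3 hall3⟩
  · intro h
    rw [Prod.ext_iff] at h
    simp only at h
    exact h12 (Prod.ext (by omega) (by omega))
  · intro h
    rw [Prod.ext_iff] at h
    simp only at h
    exact h13 (Prod.ext (by omega) (by omega))
  · intro h
    rw [Prod.ext_iff] at h
    simp only at h
    exact h23 (Prod.ext (by omega) (by omega))
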